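/- arXiv:1111.7218 — 4 statements merged into one kernel-verified Lean document; each statement's English description precedes it below -/
import Mathlib

section
/- Let $N$ be a nonnegative local martingale with $N_0 = 1$ on a filtered probability space, and suppose $Q$ is a measure such that $M_t = (1/N_t)\mathbf 1_{\{\tau > t\}}$ is the density of $P$ with respect to $Q$ on each $\mathcal G_t$. Then for every $t \geq 0$, $Q(\tau > t) = E^P[N_t]$. Consequently, $N$ is a strict local martingale under $P$ (i.e., $E^P[N_t] < 1$ for some $t$) if and only if $Q(\tau < \infty) > 0$. -/
open MeasureTheory Filter
open scoped NNReal ENNReal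

/-- With `M_t = (1/N_t) 1_{τ>t}` the density of `P` w.r.t. `Q` on each `𝓖_t`, one has
`Q(τ > t) = E^P[N_t]` for all `t`; consequently `N` is a strict local martingale under `P`
(i.e. `E^P[N_t] < 1` for some `t`, given `N_0 = 1`) iff `Q(τ < ∞) > 0`. -/
theorem follmer_mass_and_strictness
    {Ω : Type*} {m0 : MeasurableSpace Ω} (P Q : Measure Ω)
    [IsProbabilityMeasure P] [IsProbabilityMeasure Q]
    (𝓖 : Filtration ℝ≥0 m0)
    (N : ℝ≥0 → Ω → ℝ) (M : ℝ≥0 → Ω → ℝ) (τ : Ω → ℝ≥0∞)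
    (hNpos : ∀ t ω, 0 < N t ω)
    (hN0 : ∀ ω, N 0 ω = 1)
    (hNadapted : ∀ t, StronglyMeasurable[𝓖 t] (N t))
    (hNint : ∀ t, Integrable (N t) P)
    (hM : ∀ t ω, M t ω = if (t : ℝ≥0∞) < τ ω then (N t ω)⁻¹ else 0)
    -- `M_t` is the Radon–Nikodym density of `P` with respect to `Q` on `𝓖_t`, for each `t`:
    (hdens : ∀ t, ∀ s : Set Ω, MeasurableSet[𝓖 t] s → ∫ ω in s, M t ω ∂Q = (P s).toReal)
    (hPτ : ∀ t : ℝ≥0, P {ω | (t : ℝ≥0∞) < τ ω} = 1) :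
    (∀ t : ℝ≥0, (Q {ω | (t : ℝ≥0∞) < τ ω}).toReal = ∫ ω, N t ω ∂P)
      ∧ ((∃ t : ℝ≥0, ∫ ω, N t ω ∂P < 1) ↔ 0 < Q {ω | τ ω < ∞}) := by
  have key : ∀ t : ℝ≥0, (Q {ω | (t : ℝ≥0∞) < τ ω}).toReal = ∫ ω, N t ω ∂P ∧
      NullMeasurableSet {ω | (t : ℝ≥0∞) < τ ω} Q := by
    intro t
    set s : Set Ω := {ω | (t : ℝ≥0∞) < τ ω} with hsdef
    have hMnn : ∀ ω, 0 ≤ M t ω := by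
      intro ω; rw [hM]
      split
      · exact inv_nonneg.2 (hNpos t ω).le
      · exact le_rfl
    have hQ1 : ∫ ω, M t ω ∂Q = 1 := by
      have h := hdens t Set.univ MeasurableSet.univ
      simpa [measure_univ] using h
    have hMint : Integrable (M t) Q := by
      by_contra h
      rw [integral_undef h] at hQ1; norm_num at hQ1
    have hMae : AEStronglyMeasurable (M t) Q := hMint.1
    have hNm : StronglyMeasurable (N t) := (hNadapted t).mono (𝓖.le t)
    set g : Ω → ℝ := fun ω => M t ω * N t ω with hgdef
    have hgind : g = s.indicator (fun _ => (1 : ℝ)) := by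
      funext ω
      by_cases hω : ω ∈ s
      · have hω' : (t : ℝ≥0∞) < τ ω := hω
        simp only [hgdef, hM t ω, if_pos hω', Set.indicator_of_mem hω]
        exact inv_mul_cancel₀ (hNpos t ω).ne'
      · have hω' : ¬ (t : ℝ≥0∞) < τ ω := hω
        simp [hgdef, hM t ω, if_neg hω', Set.indicator_of_notMem hω]
    have hgae : AEStronglyMeasurable g Q := hMae.mul hNm.aestronglyMeasurable
    have hsnm : NullMeasurableSet s Q := by
      have hpre : s = g ⁻¹' {1} := by
        ext ω
        rw [hgind] at *
        by_cases hω : ω ∈ s <;> simp [Set.indicator_apply, hω]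
      rw [hpre]
      exact hgae.aemeasurable.nullMeasurable (measurableSet_singleton 1)
    have hint_g : ∫ ω, g ω ∂Q = (Q s).toReal := by
      have hae : toMeasurable Q s =ᵐ[Q] s := hsnm.toMeasurable_ae_eq
      have h1 : ∫ ω, g ω ∂Q
          = ∫ ω, (toMeasurable Q s).indicator (fun _ => (1 : ℝ)) ω ∂Q := by
        rw [hgind]
        exact integral_congr_ae (indicator_ae_eq_of_ae_eq_set hae.symm)
      rw [h1, integral_indicator (measurableSet_toMeasurable Q s)]
      simp [measure_toMeasurable]; rfl
    set f : Ω → ℝ≥0 := fun ω => (M t ω).toNNReal with hfdef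
    have hfae : AEMeasurable f Q :=
      measurable_real_toNNReal.comp_aemeasurable hMae.aemeasurable
    set ν : Measure Ω := Q.withDensity (fun ω => (f ω : ℝ≥0∞)) with hνdef
    have hνP : ∀ u : Set Ω, MeasurableSet[𝓖 t] u → ν u = P u := by
      intro u hu
      have hu' : MeasurableSet u := 𝓖.le t u hu
      rw [hνdef, withDensity_apply _ hu']
      have hcoe : ∀ ω, ((f ω : ℝ≥0∞)) = ENNReal.ofReal (M t ω) := fun ω => rfl
      have h2 : ENNReal.ofReal (∫ ω in u, M t ω ∂Q)
          = ∫⁻ ω in u, ENNReal.ofReal (M t ω) ∂Q :=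
        ofReal_integral_eq_lintegral_ofReal hMint.integrableOn (ae_of_all _ hMnn)
      simp_rw [hcoe]
      rw [← h2, hdens t u hu, ENNReal.ofReal_toReal (measure_ne_top P u)]
    have htrim : P.trim (𝓖.le t) = ν.trim (𝓖.le t) := by
      refine @Measure.ext Ω (𝓖 t) _ _ fun u hu => ?_
      rw [trim_measurableSet_eq _ hu, trim_measurableSet_eq _ hu, hνP u hu]
    have hEN : ∫ ω, N t ω ∂P = ∫ ω, g ω ∂Q := by
      calc ∫ ω, N t ω ∂P = ∫ ω, N t ω ∂(P.trim (𝓖.le t)) :=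
            integral_trim (𝓖.le t) (hNadapted t)
        _ = ∫ ω, N t ω ∂(ν.trim (𝓖.le t)) := by rw [htrim]
        _ = ∫ ω, N t ω ∂ν := (integral_trim (𝓖.le t) (hNadapted t)).symm
        _ = ∫ ω, f ω • N t ω ∂Q := integral_withDensity_eq_integral_smul₀ hfae _
        _ = ∫ ω, g ω ∂Q := by
            refine integral_congr_ae (ae_of_all _ fun ω => ?_)
            simp [hgdef, NNReal.smul_def, hfdef, Real.coe_toNNReal _ (hMnn ω)]
    exact ⟨by rw [hEN, hint_g], hsnm⟩
  refine ⟨fun t => (key t).1, ?_⟩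
  have hsum : ∀ t : ℝ≥0,
      Q {ω | (t : ℝ≥0∞) < τ ω} + Q {ω | τ ω ≤ (t : ℝ≥0∞)} = 1 := by
    intro t
    have hc : {ω | (t : ℝ≥0∞) < τ ω}ᶜ = {ω | τ ω ≤ (t : ℝ≥0∞)} := by
      ext ω; simp [not_lt]
    have := measure_add_measure_compl₀ (μ := Q) (key t).2
    rw [hc] at this
    simpa [measure_univ] using this
  constructor
  · rintro ⟨t, ht⟩
    rw [← (key t).1] at ht
    have hlt : Q {ω | (t : ℝ≥0∞) < τ ω} < 1 := by
      rw [← ENNReal.toReal_one] at ht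
      exact (ENNReal.toReal_lt_toReal (measure_ne_top Q _) ENNReal.one_ne_top).mp ht
    have hpos : 0 < Q {ω | τ ω ≤ (t : ℝ≥0∞)} := by
      rcases (zero_le : (0 : ℝ≥0∞) ≤ Q {ω | τ ω ≤ (t : ℝ≥0∞)}).lt_or_eq with h | h
      · exact h
      · exfalso
        have := hsum t
        rw [← h, add_zero] at this
        exact absurd this hlt.ne
    refine hpos.trans_le (measure_mono ?_)
    intro ω hω
    exact lt_of_le_of_lt hω (ENNReal.coe_lt_top)
  · intro hQpos
    by_contra hnone
    push_neg at hnone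
    have hzero : ∀ n : ℕ, Q {ω | τ ω ≤ ((n : ℝ≥0) : ℝ≥0∞)} = 0 := by
      intro n
      have h1 : (1 : ℝ) ≤ (Q {ω | ((n : ℝ≥0) : ℝ≥0∞) < τ ω}).toReal := by
        rw [(key (n : ℝ≥0)).1]; exact hnone _
      have h2 : (1 : ℝ≥0∞) ≤ Q {ω | ((n : ℝ≥0) : ℝ≥0∞) < τ ω} := by
        rw [← ENNReal.ofReal_one]
        calc (ENNReal.ofReal 1 : ℝ≥0∞)
            ≤ ENNReal.ofReal (Q {ω | ((n : ℝ≥0) : ℝ≥0∞) < τ ω}).toReal :=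
              ENNReal.ofReal_le_ofReal h1
          _ = Q {ω | ((n : ℝ≥0) : ℝ≥0∞) < τ ω} :=
              ENNReal.ofReal_toReal (measure_ne_top Q _)
      have heq : Q {ω | ((n : ℝ≥0) : ℝ≥0∞) < τ ω} = 1 :=
        le_antisymm prob_le_one h2
      have := hsum (n : ℝ≥0)
      rw [heq] at this
      have : (1 : ℝ≥0∞) + Q {ω | τ ω ≤ ((n : ℝ≥0) : ℝ≥0∞)} = 1 + 0 := by
        simpa using this
      exact (ENNReal.add_right_inj ENNReal.one_ne_top).mp this
    have hsub : {ω | τ ω < ∞} ⊆ ⋃ n : ℕ, {ω | τ ω ≤ ((n : ℝ≥0) : ℝ≥0∞)} := by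
      intro ω hω
      obtain ⟨n, hn⟩ := ENNReal.exists_nat_gt (ne_of_lt hω)
      refine Set.mem_iUnion.mpr ⟨n, ?_⟩
      have : ((n : ℝ≥0) : ℝ≥0∞) = (n : ℝ≥0∞) := by push_cast; rfl
      rw [Set.mem_setOf_eq, this]
      exact hn.le
    have : Q {ω | τ ω < ∞} = 0 := by
      refine le_antisymm ?_ zero_le
      calc Q {ω | τ ω < ∞} ≤ ∑' n : ℕ, Q {ω | τ ω ≤ ((n : ℝ≥0) : ℝ≥0∞)} :=
            (measure_mono hsub).trans (measure_iUnion_le _)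
        _ = 0 := by simp only [hzero, tsum_zero]
    exact absurd this hQpos.ne'
end

section
/- Let $Q_0$ be the Föllmer measure of the positive local martingale $N$, constructed so that $dQ_0 = N_{\tau_n} dP$ on $\mathcal G_{\tau_n}$ for each $n$, where $\tau_n = n \wedge \inf\{t : N_t \geq n\}$ and $\tau = \lim_n \tau_n$. Then $\tau_n < \tau$ holds $Q_0$-almost surely for every $n$, and on $\{\tau < \infty\}$ the left limit satisfies $N_{\tau-} = \infty$ (equivalently $M_{\tau-} = 0$) $Q_0$-almost surely; i.e., $N$ explodes continuously and does not jump to infinity. -/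
open MeasureTheory Filter Topology
open scoped NNReal ENNReal

private lemma sInf_reached {Ω : Type*} (N : ℝ≥0 → Ω → ℝ) (ω : Ω)
    (hNrc : ∀ t, ContinuousWithinAt (fun s => N s ω) (Set.Ici t) t)
    (r : ℝ) (a : ℝ≥0)
    (ha : (a : ℝ≥0∞) = sInf {t : ℝ≥0∞ | ∃ s : ℝ≥0, t = (s : ℝ≥0∞) ∧ r ≤ N s ω}) :
    r ≤ N a ω := by
  by_contra h
  push_neg at h
  have hev : ∀ᶠ s in 𝓝[Set.Ici a] a, N s ω < r :=
    (hNrc a).eventually_lt_const h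
  have hfreq : ∃ᶠ s in 𝓝[Set.Ici a] a, r ≤ N s ω := by
    rw [frequently_iff]
    intro U hU
    rw [Metric.mem_nhdsWithin_iff] at hU
    obtain ⟨ε, hε, hsub⟩ := hU
    set ε' : ℝ≥0 := ⟨ε, hε.le⟩ / 2 with hε'
    have hε'posR : (0:ℝ) < (ε':ℝ) := by
      rw [hε']; erw [NNReal.coe_div, NNReal.coe_mk, NNReal.coe_ofNat]; linarith
    have hε'pos : (0:ℝ≥0) < ε' := by exact_mod_cast hε'posR
    have hlt : sInf {t : ℝ≥0∞ | ∃ s : ℝ≥0, t = (s : ℝ≥0∞) ∧ r ≤ N s ω}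
        < (a : ℝ≥0∞) + (ε' : ℝ≥0∞) := by
      rw [← ha]
      exact ENNReal.lt_add_right (by simp) (by exact_mod_cast hε'pos.ne')
    obtain ⟨t, htS, htlt⟩ := sInf_lt_iff.mp hlt
    have hle : (a : ℝ≥0∞) ≤ t := ha ▸ sInf_le htS
    obtain ⟨s, rfl, hrs⟩ := htS
    have has : a ≤ s := by exact_mod_cast hle
    have hslt : s < a + ε' := by exact_mod_cast htlt
    refine ⟨s, hsub ⟨?_, has⟩, hrs⟩
    rw [Metric.mem_ball, NNReal.dist_eq]
    have h1 : (s:ℝ) < a + ε' := by exact_mod_cast hslt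
    have h2 : (a:ℝ) ≤ s := by exact_mod_cast has
    have h3 : (ε':ℝ) < ε := by
      rw [hε']
      erw [NNReal.coe_div, NNReal.coe_mk, NNReal.coe_ofNat]
      linarith
    rw [abs_of_nonneg (by linarith)]
    linarith
  obtain ⟨s, h1, h2⟩ := (hfreq.and_eventually hev).exists
  exact absurd h2 (not_lt.mpr h1)

/-- Lemma 2.2: under the Föllmer measure `Q₀` of a strictly positive local martingale `N`
(with localizing sequence `τ_n = n ∧ inf{t : N_t ≥ n}` and explosion time `τ = lim τ_n`),
one has `τ_n < τ` `Q₀`-a.s. for every `n`, and on `{τ < ∞}` the left limit of `N` at `τ`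
is `+∞` `Q₀`-a.s.: `N` explodes continuously and does not jump to infinity. -/
theorem follmer_explodes_continuously
    {Ω : Type*} {m0 : MeasurableSpace Ω} (P Q0 : Measure Ω)
    [IsProbabilityMeasure P] [IsProbabilityMeasure Q0]
    (𝓖 : Filtration ℝ≥0 m0)
    (N : ℝ≥0 → Ω → ℝ)
    (τn : ℕ → Ω → ℝ≥0) (τ : Ω → ℝ≥0∞)
    (hNpos : ∀ t ω, 0 < N t ω)
    (hN0 : ∀ ω, N 0 ω = 1)
    -- càdlàg paths (right-continuity is what is used):
    (hNrc : ∀ ω t, ContinuousWithinAt (fun s => N s ω) (Set.Ici t) t)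
    -- `τ_n = n ∧ inf{t ≥ 0 : N_t ≥ n}`:
    (hτn : ∀ n ω, (τn n ω : ℝ≥0∞)
      = min (n : ℝ≥0∞) (sInf {t : ℝ≥0∞ | ∃ s : ℝ≥0, t = (s : ℝ≥0∞) ∧ (n : ℝ) ≤ N s ω}))
    (hst : ∀ n, IsStoppingTime 𝓖 (fun ω => (τn n ω : WithTop ℝ≥0)))
    -- `τ = lim_n τ_n`:
    (hτ : ∀ ω, τ ω = ⨆ n, (τn n ω : ℝ≥0∞))
    -- `N` is a `P`-local martingale: each stopped process `N^{τ_n}` is a `P`-martingale: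
    (hlocmart : ∀ n, Martingale (stoppedProcess N (fun ω => (τn n ω : WithTop ℝ≥0))) 𝓖 P)
    -- `Q₀` agrees with `N_{τ_n} dP` on the σ-field `𝓖_{τ_n}`, for each `n`:
    (hQ0 : ∀ n, ∀ s : Set Ω, MeasurableSet[(hst n).measurableSpace] s →
      (Q0 s).toReal = ∫ ω in s, stoppedValue N (fun ω => (τn n ω : WithTop ℝ≥0)) ω ∂P) :
    (∀ n, Q0 {ω | ¬ ((τn n ω : ℝ≥0∞) < τ ω)} = 0)
      ∧ (∀ᵐ ω ∂Q0, τ ω < ∞ →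
          Tendsto (fun s : ℝ≥0 => N s ω) (𝓝[<] (τ ω).toNNReal) atTop) := by
  classical
  have hsp : ∀ (n : ℕ) (t : ℝ≥0) ω, stoppedProcess N (fun ω => (τn n ω : WithTop ℝ≥0)) t ω
      = N (min t (τn n ω)) ω := by
    intro n t ω
    simp only [stoppedProcess, ← WithTop.coe_min]; rfl
  -- basic facts about τn
  have hle : ∀ (n : ℕ) ω, (τn n ω : ℝ≥0∞) ≤ (n : ℝ≥0∞) := fun n ω => by
    rw [hτn n ω]; exact min_le_left _ _
  have hleN : ∀ (n : ℕ) ω, τn n ω ≤ (n : ℝ≥0) := by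
    intro n ω
    have := hle n ω
    rw [show ((n:ℕ) : ℝ≥0∞) = ((n : ℝ≥0) : ℝ≥0∞) by push_cast; rfl] at this
    exact_mod_cast this
  have hmono : ∀ (n m : ℕ), n ≤ m → ∀ ω, τn n ω ≤ τn m ω := by
    intro n m hnm ω
    have : (τn n ω : ℝ≥0∞) ≤ (τn m ω : ℝ≥0∞) := by
      rw [hτn n ω, hτn m ω]
      apply min_le_min (by exact_mod_cast Nat.cast_le.mpr hnm)
      apply sInf_le_sInf
      rintro t ⟨s, rfl, hs⟩
      exact ⟨s, rfl, le_trans (by exact_mod_cast hnm) hs⟩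
    exact_mod_cast this
  have hval : ∀ (n : ℕ) ω, (τn n ω : ℝ≥0∞) < (n : ℝ≥0∞) → (n : ℝ) ≤ N (τn n ω) ω := by
    intro n ω hlt
    apply sInf_reached N ω (hNrc ω)
    have h := hτn n ω
    rcases min_cases (n : ℝ≥0∞) (sInf {t : ℝ≥0∞ | ∃ s : ℝ≥0, t = (s : ℝ≥0∞) ∧ (n : ℝ) ≤ N s ω})
      with ⟨heq, _⟩ | ⟨heq, _⟩
    · rw [heq] at h; exact absurd h (ne_of_lt hlt)
    · rw [heq] at h; exact h
  -- part 1 : τn < τ everywhere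
  have hlt : ∀ (n : ℕ) ω, (τn n ω : ℝ≥0∞) < τ ω := by
    intro n ω
    by_contra hcon
    push_neg at hcon
    obtain ⟨M, hM⟩ := exists_nat_gt (N (τn n ω) ω)
    set m := max (n + 1) M with hm
    have hmn : n ≤ m := le_trans (Nat.le_succ n) (le_max_left _ _)
    have h1 : τn m ω = τn n ω := by
      apply le_antisymm _ (hmono n m hmn ω)
      have : (τn m ω : ℝ≥0∞) ≤ (τn n ω : ℝ≥0∞) :=
        le_trans (le_trans (le_iSup (fun k => ((τn k ω : ℝ≥0∞))) m) (hτ ω ▸ le_rfl)) hcon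
      exact_mod_cast this
    have h2 : (τn m ω : ℝ≥0∞) < (m : ℝ≥0∞) := by
      rw [h1]
      calc (τn n ω : ℝ≥0∞) ≤ (n : ℝ≥0∞) := hle n ω
        _ < (m : ℝ≥0∞) := by exact_mod_cast Nat.lt_of_lt_of_le (Nat.lt_succ_self n) (le_max_left _ _)
    have := hval m ω h2
    rw [h1] at this
    have hMm : (M : ℝ) ≤ (m : ℝ) := by exact_mod_cast le_max_right (n+1) M
    linarith
  -- Markov inequality
  have hSmeas : ∀ (n : ℕ) (m : ℕ), MeasurableSet {ω | τn n ω ≤ (m : ℝ≥0)} := by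
    intro n m
    have h := (hst n).measurableSet_le (m : ℝ≥0)
    simp only [WithTop.coe_le_coe] at h
    exact 𝓖.le _ _ h
  have hMarkov : ∀ m n : ℕ, m < n →
      P {ω | τn n ω ≤ (m : ℝ≥0)} ≤ ENNReal.ofReal (1 / n) := by
    intro m n hmn
    set S := {ω | τn n ω ≤ (m : ℝ≥0)} with hS
    set X := stoppedProcess N (fun ω => (τn n ω : WithTop ℝ≥0)) with hX
    have hnpos : (0:ℝ) < n := by exact_mod_cast Nat.pos_of_ne_zero (by omega)
    have hptwise : ∀ ω ∈ S, (n : ℝ) ≤ X (n : ℝ≥0) ω := by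
      intro ω hω
      have hτm : τn n ω ≤ (m : ℝ≥0) := hω
      have hτlt : (τn n ω : ℝ≥0∞) < (n : ℝ≥0∞) := by
        calc (τn n ω : ℝ≥0∞) ≤ ((m : ℝ≥0) : ℝ≥0∞) := by exact_mod_cast hτm
          _ < (n : ℝ≥0∞) := by
            rw [show ((m:ℝ≥0) : ℝ≥0∞) = ((m:ℕ) : ℝ≥0∞) by push_cast; rfl]
            exact_mod_cast hmn
      have := hval n ω hτlt
      have hmin : min ((n:ℕ) : ℝ≥0) (τn n ω) = τn n ω := by
        apply min_eq_right
        exact hleN n ω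
      rw [hX, hsp]
      rw [show ((n:ℕ) : ℝ≥0) = ((n:ℕ) : ℝ≥0) from rfl, hmin]
      exact this
    have hint : Integrable (X (n : ℝ≥0)) P := (hlocmart n).integrable _
    have hX0 : ∫ ω, X (0 : ℝ≥0) ω ∂P = 1 := by
      have : ∀ ω, X (0 : ℝ≥0) ω = 1 := by
        intro ω
        rw [hX, hsp]
        rw [min_eq_left zero_le, hN0]
      simp only [this]
      simp
    have hXn : ∫ ω, X (n : ℝ≥0) ω ∂P = 1 := by
      have := (hlocmart n).setIntegral_eq (zero_le : (0:ℝ≥0) ≤ ((n:ℕ) : ℝ≥0)) (MeasurableSet.univ)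
      rw [setIntegral_univ, setIntegral_univ] at this
      rw [← this, hX0]
    have key : (n : ℝ) * (P S).toReal ≤ 1 := by
      have h1 : (n : ℝ) * (P S).toReal = ∫ _ω in S, (n:ℝ) ∂P := by
        rw [setIntegral_const]; simp [mul_comm, Measure.real]
      have h2 : ∫ _ω in S, (n:ℝ) ∂P ≤ ∫ ω in S, X (n : ℝ≥0) ω ∂P := by
        apply setIntegral_mono_on (integrable_const _).integrableOn
          hint.integrableOn (hSmeas n m) hptwise
      have h3 : ∫ ω in S, X (n : ℝ≥0) ω ∂P ≤ ∫ ω, X (n : ℝ≥0) ω ∂P := by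
        apply setIntegral_le_integral hint
        filter_upwards with ω
        rw [hX, hsp]
        exact (hNpos _ ω).le
      rw [h1, ← hXn]
      exact le_trans h2 h3
    have hPS : (P S).toReal ≤ 1 / n := by
      rw [le_div_iff₀ hnpos, mul_comm]
      exact key
    calc P S = ENNReal.ofReal (P S).toReal := by
          rw [ENNReal.ofReal_toReal (measure_ne_top P S)]
      _ ≤ ENNReal.ofReal (1 / n) := ENNReal.ofReal_le_ofReal hPS
  -- the grid approximation events
  set q : ℕ → ℕ → ℝ≥0 := fun r i => (i : ℝ≥0) / 2 ^ r with hqdef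
  set A : ℕ → ℕ → ℕ → ℕ → Set Ω := fun n c m r =>
    {ω | ∃ i : ℕ, 1 ≤ i ∧ i ≤ m * 2 ^ r ∧ τn n ω < q r i ∧ q r i < τn (m + r) ω ∧
      stoppedProcess N (fun ω => (τn (m + r) ω : WithTop ℝ≥0)) (q r i) ω < (c : ℝ)} with hAdef
  have hqmono : ∀ r i i', i ≤ i' → q r i ≤ q r i' := by
    intro r i i' h
    rw [hqdef]
    apply div_le_div_of_nonneg_right ?_ (by positivity)
    exact_mod_cast h
  have hqle : ∀ r i (m : ℕ), i ≤ m * 2 ^ r → q r i ≤ (m : ℝ≥0) := by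
    intro r i m h
    rw [hqdef]
    rw [div_le_iff₀ (by positivity)]
    calc (i : ℝ≥0) ≤ ((m * 2 ^ r : ℕ) : ℝ≥0) := by exact_mod_cast h
      _ = (m : ℝ≥0) * 2 ^ r := by push_cast; ring
  -- key estimate
  have hKey : ∀ n c m r : ℕ,
      Q0 (A n c m r) ≤ (c : ℝ≥0∞) * P {ω | τn n ω ≤ (m : ℝ≥0)} := by
    intro n c m r
    set K := m + r with hK
    set X := stoppedProcess N (fun ω => (τn K ω : WithTop ℝ≥0)) with hXdef
    set B : ℕ → Set Ω := fun i =>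
      {ω | τn n ω < q r i ∧ q r i < τn K ω ∧ X (q r i) ω < (c : ℝ)} with hBdef
    set B' : ℕ → Set Ω := fun i => B i \ ⋃ (i' : ℕ) (_ : i' < i), B i' with hB'def
    have hB0 : B 0 = ∅ := by
      rw [hBdef]
      ext ω
      simp only [Set.mem_setOf_eq, Set.mem_empty_iff_false, iff_false]
      rintro ⟨h1, -, -⟩
      have : q r 0 = 0 := by rw [hqdef]; simp
      rw [this] at h1
      exact absurd h1 (by simp)
    have hBmeas : ∀ i, MeasurableSet[𝓖 (q r i)] (B i) := by
      intro i
      apply MeasurableSet.inter (by have h := (hst n).measurableSet_lt (q r i); simp only [WithTop.coe_lt_coe] at h; exact h)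
      apply MeasurableSet.inter
      · have h := (hst K).measurableSet_gt (q r i); simp only [WithTop.coe_lt_coe] at h; exact h
      · exact measurableSet_lt (((hlocmart K).1 (q r i)).measurable) measurable_const
    have hB'meas : ∀ i, MeasurableSet[𝓖 (q r i)] (B' i) := by
      intro i
      apply (hBmeas i).diff
      apply MeasurableSet.iUnion
      intro i'
      apply MeasurableSet.iUnion
      intro hi'
      exact 𝓖.mono (hqmono r i' i hi'.le) _ (hBmeas i')
    have hAeq : A n c m r = ⋃ i ∈ Finset.Icc 1 (m * 2 ^ r), B' i := by
      ext ω
      simp only [hAdef, Set.mem_setOf_eq, Set.mem_iUnion, Finset.mem_Icc, exists_prop]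
      constructor
      · rintro ⟨i, hi1, hi2, h3, h4, h5⟩
        have hex : ∃ j, ω ∈ B j := ⟨i, h3, h4, h5⟩
        set j := Nat.find hex with hj
        have hjB : ω ∈ B j := Nat.find_spec hex
        have hji : j ≤ i := Nat.find_min' hex ⟨h3, h4, h5⟩
        have hj1 : 1 ≤ j := by
          rcases Nat.eq_zero_or_pos j with h | h
          · rw [h] at hjB; rw [hB0] at hjB; exact absurd hjB (Set.notMem_empty ω)
          · exact h
        refine ⟨j, ⟨hj1, le_trans hji hi2⟩, hjB, ?_⟩
        simp only [Set.mem_iUnion, not_exists]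
        intro i' hi'
        exact Nat.find_min hex hi'
      · rintro ⟨i, ⟨hi1, hi2⟩, hiB, -⟩
        exact ⟨i, hi1, hi2, hiB.1, hiB.2.1, hiB.2.2⟩
    have hdisj : Set.Pairwise ↑(Finset.Icc 1 (m * 2 ^ r)) (Function.onFun Disjoint B') := by
      intro i _ j _ hij
      have key : ∀ a b : ℕ, a < b → Disjoint (B' a) (B' b) := by
        intro a b hab
        rw [Set.disjoint_left]
        intro ω hωa hωb
        have : ω ∈ B a := hωa.1
        exact hωb.2 (Set.mem_iUnion.mpr ⟨a, Set.mem_iUnion.mpr ⟨hab, this⟩⟩)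
      rcases lt_or_gt_of_ne hij with h | h
      · exact key i j h
      · exact (key j i h).symm
    have hstopA : MeasurableSet[(hst K).measurableSpace] (A n c m r) := by
      rw [(hst K).measurableSet]
      refine ⟨?_, fun t => ?_⟩
      · rw [hAeq]
        exact MeasurableSet.iUnion fun i => MeasurableSet.iUnion fun _ =>
          le_iSup (fun t => 𝓖 t) (q r i) _ (hB'meas i)
      rw [hAeq, Set.iUnion₂_inter]
      apply MeasurableSet.iUnion
      intro i
      apply MeasurableSet.iUnion
      intro hi
      by_cases hqt : q r i ≤ t
      · exact MeasurableSet.inter (𝓖.mono hqt _ (hB'meas i)) ((hst K) t)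
      · have : B' i ∩ {ω | ((τn K ω : ℝ≥0) : WithTop ℝ≥0) ≤ (t : WithTop ℝ≥0)} = ∅ := by
          ext ω
          simp only [Set.mem_inter_iff, Set.mem_empty_iff_false, iff_false, not_and,
            Set.mem_setOf_eq]
          intro hωB hωt
          have h1 : q r i < τn K ω := hωB.1.2.1
          exact hqt (le_trans h1.le (WithTop.coe_le_coe.mp hωt))
        rw [this]
        exact @MeasurableSet.empty _ (𝓖 t)
    have hQA := hQ0 K _ hstopA
    have hsv : ∀ ω, stoppedValue N (fun ω => (τn K ω : WithTop ℝ≥0)) ω = X ((K : ℕ) : ℝ≥0) ω := by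
      intro ω
      rw [hXdef, hsp, min_eq_right (hleN K ω)]
      rfl
    have hXint : Integrable (X ((K : ℕ) : ℝ≥0)) P := (hlocmart K).integrable _
    have hsplit : ∫ ω in A n c m r, stoppedValue N (fun ω => (τn K ω : WithTop ℝ≥0)) ω ∂P
        = ∑ i ∈ Finset.Icc 1 (m * 2 ^ r), ∫ ω in B' i, X ((K : ℕ) : ℝ≥0) ω ∂P := by
      simp only [hsv]
      rw [hAeq]
      exact integral_biUnion_finset _ (fun i _ => 𝓖.le _ _ (hB'meas i)) hdisj
        (fun i _ => hXint.integrableOn)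
    have hbound : ∀ i ∈ Finset.Icc 1 (m * 2 ^ r),
        ∫ ω in B' i, X ((K : ℕ) : ℝ≥0) ω ∂P ≤ (c : ℝ) * (P (B' i)).toReal := by
      intro i hi
      rw [Finset.mem_Icc] at hi
      have hqK : q r i ≤ ((K : ℕ) : ℝ≥0) := by
        refine le_trans (hqle r i m hi.2) ?_
        exact_mod_cast Nat.cast_le.mpr (Nat.le_add_right m r)
      have heq := (hlocmart K).setIntegral_eq hqK (hB'meas i)
      rw [← hXdef] at heq
      rw [← heq]
      have hle' : ∀ ω ∈ B' i, X (q r i) ω ≤ (c : ℝ) := fun ω hω => (hω.1.2.2).le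
      calc ∫ ω in B' i, X (q r i) ω ∂P ≤ ∫ _ω in B' i, (c : ℝ) ∂P :=
            setIntegral_mono_on ((hlocmart K).integrable _).integrableOn
              (integrable_const _).integrableOn (𝓖.le _ _ (hB'meas i)) hle'
        _ = (c : ℝ) * (P (B' i)).toReal := by rw [setIntegral_const]; simp [mul_comm, Measure.real]
    have hsum : ∑ i ∈ Finset.Icc 1 (m * 2 ^ r), (c : ℝ) * (P (B' i)).toReal
        = (c : ℝ) * (P (A n c m r)).toReal := by
      rw [← Finset.mul_sum]
      congr 1
      rw [hAeq, measure_biUnion_finset hdisj (fun i _ => 𝓖.le _ _ (hB'meas i))]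
      exact (ENNReal.toReal_sum (fun i _ => measure_ne_top P _)).symm
    have hsubA : A n c m r ⊆ {ω | τn n ω ≤ (m : ℝ≥0)} := by
      rintro ω ⟨i, _, hi2, h3, -, -⟩
      exact le_trans h3.le (hqle r i m hi2)
    have htr : (Q0 (A n c m r)).toReal
        ≤ ((c : ℝ≥0∞) * P {ω | τn n ω ≤ (m : ℝ≥0)}).toReal := by
      rw [hQA, ENNReal.toReal_mul, ENNReal.toReal_natCast]
      calc ∫ ω in A n c m r, stoppedValue N (fun ω => (τn K ω : WithTop ℝ≥0)) ω ∂P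
          ≤ ∑ i ∈ Finset.Icc 1 (m * 2 ^ r), (c : ℝ) * (P (B' i)).toReal := by
            rw [hsplit]; exact Finset.sum_le_sum hbound
        _ = (c : ℝ) * (P (A n c m r)).toReal := hsum
        _ ≤ (c : ℝ) * (P {ω | τn n ω ≤ (m : ℝ≥0)}).toReal := by
            apply mul_le_mul_of_nonneg_left _ (by positivity)
            exact ENNReal.toReal_mono (measure_ne_top P _) (measure_mono hsubA)
    exact (ENNReal.toReal_le_toReal (measure_ne_top Q0 _)
      (ENNReal.mul_ne_top (ENNReal.natCast_ne_top c) (measure_ne_top P _))).mp htr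
  -- A is monotone in r
  have hAmono : ∀ n c m : ℕ, Monotone (fun r => A n c m r) := by
    intro n c m
    apply monotone_nat_of_le_succ
    intro r ω hω
    obtain ⟨i, h1, h2, h3, h4, h5⟩ := hω
    have hq2 : q (r + 1) (2 * i) = q r i := by
      rw [hqdef]
      simp only
      rw [pow_succ, mul_comm ((2:ℝ≥0) ^ r) 2]
      push_cast
      rw [mul_div_mul_left _ _ (two_ne_zero)]
    have h4' : q (r + 1) (2 * i) < τn (m + (r + 1)) ω := by
      rw [hq2]
      exact lt_of_lt_of_le h4 (hmono (m + r) (m + (r + 1)) (by omega) ω)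
    refine ⟨2 * i, by omega, ?_, by rw [hq2]; exact h3, h4', ?_⟩
    · have ht : i ≤ m * 2 ^ r := h2
      have : 2 ^ (r + 1) = 2 ^ r * 2 := pow_succ 2 r
      rw [this]
      nlinarith [ht]
    · rw [hq2]
      have e1 : stoppedProcess N (fun ω => (τn (m + (r + 1)) ω : WithTop ℝ≥0)) (q r i) ω = N (q r i) ω := by
        rw [hsp]
        rw [min_eq_left (by rw [← hq2]; exact h4'.le)]
      have e2 : stoppedProcess N (fun ω => (τn (m + r) ω : WithTop ℝ≥0)) (q r i) ω = N (q r i) ω := by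
        rw [hsp]
        rw [min_eq_left h4.le]
      rw [e1, ← e2]
      exact h5
  -- each Fail set is Q0-null
  have hFail : ∀ c m : ℕ, Q0 (⋂ n : ℕ, ⋃ r : ℕ, A n c m r) = 0 := by
    intro c m
    have hub : ∀ n : ℕ, m < n → Q0 (⋂ n' : ℕ, ⋃ r : ℕ, A n' c m r)
        ≤ (c : ℝ≥0∞) * ENNReal.ofReal (1 / n) := by
      intro n hn
      calc Q0 (⋂ n' : ℕ, ⋃ r : ℕ, A n' c m r) ≤ Q0 (⋃ r : ℕ, A n c m r) :=
            measure_mono (Set.iInter_subset _ n)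
        _ = ⨆ r, Q0 (A n c m r) := Directed.measure_iUnion ((hAmono n c m).directed_le)
        _ ≤ (c : ℝ≥0∞) * P {ω | τn n ω ≤ (m : ℝ≥0)} := iSup_le (fun r => hKey n c m r)
        _ ≤ _ := mul_le_mul_right (hMarkov m n hn) _
    have htend : Tendsto (fun n : ℕ => (c : ℝ≥0∞) * ENNReal.ofReal (1 / n)) atTop (𝓝 0) := by
      have h1 : Tendsto (fun n : ℕ => (1 : ℝ) / n) atTop (𝓝 0) :=
        tendsto_one_div_atTop_nhds_zero_nat
      have h2 := ENNReal.tendsto_ofReal h1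
      rw [ENNReal.ofReal_zero] at h2
      have h3 := ENNReal.Tendsto.const_mul h2 (Or.inr (ENNReal.natCast_ne_top c))
      rwa [mul_zero] at h3
    have hle0 : Q0 (⋂ n : ℕ, ⋃ r : ℕ, A n c m r) ≤ 0 :=
      ge_of_tendsto htend (eventually_atTop.mpr ⟨m + 1, fun n hn => hub n (by omega)⟩)
    exact le_antisymm hle0 zero_le
  refine ⟨?_, ?_⟩
  · intro n
    have : {ω | ¬ ((τn n ω : ℝ≥0∞) < τ ω)} = ∅ :=
      Set.eq_empty_iff_forall_notMem.mpr fun ω h => h (hlt n ω)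
    rw [this, measure_empty]
  · rw [ae_iff]
    apply measure_mono_null ?_
      (measure_iUnion_null fun c : ℕ => measure_iUnion_null fun m : ℕ => hFail c m)
    intro ω hω
    simp only [Set.mem_setOf_eq] at hω
    push_neg at hω
    obtain ⟨hτfin, hnt⟩ := hω
    obtain ⟨m, hm⟩ : ∃ m : ℕ, τ ω ≤ (m : ℝ≥0∞) := by
      obtain ⟨m, hm⟩ := ENNReal.exists_nat_gt hτfin.ne
      exact ⟨m, hm.le⟩
    rw [tendsto_atTop] at hnt
    push_neg at hnt
    obtain ⟨b, hb⟩ := hnt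
    obtain ⟨c, hbc⟩ := exists_nat_ge b
    refine Set.mem_iUnion.mpr ⟨c, Set.mem_iUnion.mpr ⟨m, Set.mem_iInter.mpr fun n => ?_⟩⟩
    -- construct a grid witness for each n
    set x := (τ ω).toNNReal with hxdef
    have hxne : τ ω ≠ ∞ := hτfin.ne
    have hcoex : ((τ ω).toNNReal : ℝ≥0∞) = τ ω := ENNReal.coe_toNNReal hxne
    have ha2 : τn n ω < x := by
      rw [← ENNReal.coe_lt_coe, hxdef, hcoex]
      exact hlt n ω
    have hxm : x ≤ (m : ℝ≥0) := by
      rw [← ENNReal.coe_le_coe, hxdef, hcoex]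
      rw [show (((m : ℕ) : ℝ≥0) : ℝ≥0∞) = ((m : ℕ) : ℝ≥0∞) by push_cast; rfl]
      exact hm
    have hIoo : Set.Ioo (τn n ω) x ∈ 𝓝[<] x := Ioo_mem_nhdsLT_of_mem ⟨ha2, le_rfl⟩
    have hIooEv : ∀ᶠ y in 𝓝[<] x, y ∈ Set.Ioo (τn n ω) x := hIoo
    obtain ⟨s, hsb, hsIoo⟩ := (hb.and_eventually hIooEv).exists
    have hsc : N s ω < (c : ℝ) := lt_of_lt_of_le hsb hbc
    have hsx : (s : ℝ≥0∞) < τ ω := by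
      rw [← hcoex]
      exact_mod_cast hsIoo.2
    obtain ⟨k, hk⟩ : ∃ k, (s : ℝ≥0∞) < (τn k ω : ℝ≥0∞) := by
      rw [hτ ω] at hsx
      exact lt_iSup_iff.mp hsx
    have hks : s < τn k ω := by exact_mod_cast hk
    have hev : ∀ᶠ u in 𝓝[Set.Ici s] s, N u ω < (c : ℝ) :=
      (hNrc ω s).eventually_lt_const hsc
    obtain ⟨ε, hε, hball⟩ := Metric.mem_nhdsWithin_iff.mp hev
    set δ : ℝ := min ε (min ((τn k ω : ℝ) - s) ((x : ℝ) - s)) with hδdef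
    have hδpos : 0 < δ := by
      apply lt_min hε
      apply lt_min
      · have : (s : ℝ) < (τn k ω : ℝ) := by exact_mod_cast hks
        linarith
      · have : (s : ℝ) < (x : ℝ) := by exact_mod_cast hsIoo.2
        linarith
    obtain ⟨r₀, hr₀⟩ : ∃ r₀ : ℕ, (1 / 2 : ℝ) ^ r₀ < δ :=
      exists_pow_lt_of_lt_one hδpos (by norm_num)
    set r := max r₀ k with hrdef
    have hpow : (1 / 2 : ℝ) ^ r < δ :=
      lt_of_le_of_lt (pow_le_pow_of_le_one (by norm_num) (by norm_num) (le_max_left _ _)) hr₀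
    set i : ℕ := ⌊(s : ℝ) * 2 ^ r⌋₊ + 1 with hidef
    have h2rpos : (0 : ℝ) < 2 ^ r := by positivity
    have hsi : (s : ℝ) * 2 ^ r < i := by
      rw [hidef]
      push_cast
      exact Nat.lt_floor_add_one _
    have hii : (i : ℝ) ≤ (s : ℝ) * 2 ^ r + 1 := by
      rw [hidef]
      push_cast
      have := Nat.floor_le (by positivity : (0 : ℝ) ≤ (s : ℝ) * 2 ^ r)
      linarith
    have hqvr : ((q r i : ℝ≥0) : ℝ) = (i : ℝ) / 2 ^ r := by
      rw [hqdef]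
      push_cast
      rfl
    have hsq : (s : ℝ) < ((q r i : ℝ≥0) : ℝ) := by
      rw [hqvr, lt_div_iff₀ h2rpos]
      exact hsi
    have hqs : ((q r i : ℝ≥0) : ℝ) < (s : ℝ) + δ := by
      rw [hqvr, div_lt_iff₀ h2rpos]
      have hp : (1 / 2 : ℝ) ^ r = 1 / 2 ^ r := by
        rw [div_pow, one_pow]
      have h1 : (1 : ℝ) / 2 ^ r < δ := by rw [← hp]; exact hpow
      have : ((s : ℝ) + δ) * 2 ^ r = (s : ℝ) * 2 ^ r + δ * 2 ^ r := by ring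
      rw [this]
      have h2 : (1 : ℝ) < δ * 2 ^ r := by
        rw [div_lt_iff₀ h2rpos] at h1
        linarith
      linarith
    have hqτk : ((q r i : ℝ≥0) : ℝ) < (τn k ω : ℝ) := by
      have : δ ≤ (τn k ω : ℝ) - s := le_trans (min_le_right _ _) (min_le_left _ _)
      linarith
    have hqx : ((q r i : ℝ≥0) : ℝ) < (x : ℝ) := by
      have : δ ≤ (x : ℝ) - s := le_trans (min_le_right _ _) (min_le_right _ _)
      linarith
    have hqτK : q r i < τn (m + r) ω := by
      have h1 : q r i < τn k ω := by exact_mod_cast hqτk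
      exact lt_of_lt_of_le h1 (hmono k (m + r) (le_trans (le_max_right r₀ k) (by omega)) ω)
    have him : i ≤ m * 2 ^ r := by
      have h1 : (i : ℝ) < (m : ℝ) * 2 ^ r := by
        have hxm' : (x : ℝ) ≤ (m : ℝ) := by exact_mod_cast hxm
        have : (i : ℝ) = ((q r i : ℝ≥0) : ℝ) * 2 ^ r := by
          rw [hqvr, div_mul_cancel₀ _ (ne_of_gt h2rpos)]
        rw [this]
        have := mul_lt_mul_of_pos_right (lt_of_lt_of_le hqx hxm') h2rpos
        exact this
      have h2 : i < m * 2 ^ r := by exact_mod_cast h1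
      exact h2.le
    have hNq : N (q r i) ω < (c : ℝ) := by
      apply hball
      constructor
      · rw [Metric.mem_ball, NNReal.dist_eq]
        rw [abs_of_nonneg (by linarith)]
        have : δ ≤ ε := min_le_left _ _
        linarith
      · exact Set.mem_Ici.mpr (le_of_lt (by exact_mod_cast hsq))
    refine Set.mem_iUnion.mpr ⟨r, ⟨i, by omega, him, ?_, hqτK, ?_⟩⟩
    · calc τn n ω < s := hsIoo.1
        _ < q r i := by exact_mod_cast hsq
    · rw [hsp]
      rw [min_eq_left hqτK.le]
      exact hNq
end

section
/- Let $M$ be a nonnegative right-continuous martingale under $Q$ that is constant after a stopping time $\zeta$, and let $\tau = \lim_n \tau_n$ where $\tau_n = n \wedge \inf\{t : M_t \leq 1/n\}$. Then $\tau \leq \zeta$ holds $Q$-almost surely on $\{\tau < \infty\}$; equivalently, $Q(\zeta < \tau < \infty) = 0$. -/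
open MeasureTheory Filter Topology
open scoped NNReal ENNReal

/-- Proposition 4.6(i): if `M` is a nonnegative right-continuous `Q`-martingale that is
constant after a (stopping) time `ζ`, and `τ = lim_n τ_n` with
`τ_n = n ∧ inf{t : M_t ≤ 1/n}`, then `τ ≤ ζ` `Q`-a.s. on `{τ < ∞}`, i.e.
`Q(ζ < τ < ∞) = 0`. -/
theorem hitting_time_before_absorption
    {Ω : Type*} {m0 : MeasurableSpace Ω} (Q : Measure Ω) [IsProbabilityMeasure Q]
    (𝓖 : Filtration ℝ≥0∞ m0)
    (M : ℝ≥0∞ → Ω → ℝ)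
    (hMnonneg : ∀ t ω, 0 ≤ M t ω)
    (hM : Martingale M 𝓖 Q)
    -- right-continuous paths (at finite times):
    (hMrc : ∀ ω, ∀ t : ℝ≥0∞, t ≠ ⊤ → ContinuousWithinAt (fun s => M s ω) (Set.Ici t) t)
    (ζ : Ω → ℝ≥0∞) (hζ : IsStoppingTime 𝓖 (fun ω => ((ζ ω : ℝ≥0∞) : WithTop ℝ≥0∞)))
    -- `M` is constant after `ζ`:
    (hconst : ∀ t : ℝ≥0∞, ∀ᵐ ω ∂Q, M t ω = M (min t (ζ ω)) ω)
    (τn : ℕ → Ω → ℝ≥0∞) (τ : Ω → ℝ≥0∞)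
    -- `τ_n = n ∧ inf{t : M_t ≤ 1/n}` and `τ = lim_n τ_n`:
    (hτn : ∀ n ω, τn n ω = min (n : ℝ≥0∞) (sInf {t : ℝ≥0∞ | M t ω ≤ 1 / (n : ℝ)}))
    (hτ : ∀ ω, τ ω = ⨆ n, τn n ω) :
    Q {ω | ζ ω < τ ω ∧ τ ω < ⊤} = 0 := by
  -- a.s., constancy after ζ holds simultaneously at all "rational" times
  have Hae : ∀ᵐ ω ∂Q, ∀ q : ℚ,
      M ((Real.toNNReal q : ℝ≥0) : ℝ≥0∞) ω
        = M (min ((Real.toNNReal q : ℝ≥0) : ℝ≥0∞) (ζ ω)) ω :=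
    ae_all_iff.mpr fun q => hconst _
  rw [← nonpos_iff_eq_zero]
  refine le_trans (measure_mono ?_) (le_of_eq (ae_iff.mp Hae))
  intro ω hω
  simp only [Set.mem_setOf_eq] at hω ⊢
  obtain ⟨hζτ, hτtop⟩ := hω
  intro H
  -- pick n with ζ ω < τn n ω
  rw [hτ ω] at hζτ hτtop
  obtain ⟨n, hn⟩ := lt_iSup_iff.mp hζτ
  rw [hτn] at hn
  have hnσ : ζ ω < sInf {t : ℝ≥0∞ | M t ω ≤ 1 / (n : ℝ)} :=
    hn.trans_le (min_le_right _ _)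
  have hn0 : 0 < n := by
    rcases Nat.eq_zero_or_pos n with h | h
    · exfalso
      have := hn.trans_le (min_le_left _ _)
      simp [h] at this
    · exact h
  -- M ζ > 1/n
  have hMζ : 1 / (n : ℝ) < M (ζ ω) ω := by
    by_contra h
    push_neg at h
    exact absurd (sInf_le (show ζ ω ∈ {t : ℝ≥0∞ | M t ω ≤ 1 / (n : ℝ)} from h)) hnσ.not_ge
  -- pick m ≥ n with τ ω < m
  obtain ⟨k, hk⟩ := ENNReal.exists_nat_gt hτtop.ne
  set m := max n k with hm
  have hτm : (⨆ i, τn i ω) < (m : ℝ≥0∞) :=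
    hk.trans_le (by exact_mod_cast Nat.cast_le.mpr (le_max_right n k))
  have hmin : min (m : ℝ≥0∞) (sInf {t : ℝ≥0∞ | M t ω ≤ 1 / (m : ℝ)}) < (m : ℝ≥0∞) := by
    rw [← hτn]
    exact (le_iSup _ m).trans_lt hτm
  have hσm : sInf {t : ℝ≥0∞ | M t ω ≤ 1 / (m : ℝ)} < (m : ℝ≥0∞) := by
    rcases min_lt_iff.mp hmin with h | h
    · exact absurd h (lt_irrefl _)
    · exact h
  obtain ⟨t, htS, htm⟩ := sInf_lt_iff.mp hσm
  have httop : t ≠ ⊤ := (htm.trans (ENNReal.natCast_lt_top m)).ne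
  -- S_m ⊆ S_n, so sInf S_n ≤ sInf S_m ≤ t, hence ζ ω < t
  have honediv : 1 / (m : ℝ) ≤ 1 / (n : ℝ) := by
    apply one_div_le_one_div_of_le
    · exact_mod_cast hn0
    · exact_mod_cast le_max_left n k
  have hζt : ζ ω < t := by
    refine hnσ.trans_le (le_trans (sInf_le_sInf ?_) (sInf_le htS))
    intro s hs
    exact le_trans hs honediv
  -- constancy of M after ζ at time t : M t ω = M (ζ ω) ω
  have hMt : M t ω = M (ζ ω) ω := by
    -- choose rationals q k with t < q k < t + (k+1)⁻¹
    have hex : ∀ j : ℕ, ∃ q : ℚ, 0 ≤ q ∧ t < ((Real.toNNReal q : ℝ≥0) : ℝ≥0∞) ∧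
        ((Real.toNNReal q : ℝ≥0) : ℝ≥0∞) < t + ((j : ℝ≥0∞) + 1)⁻¹ := by
      intro j
      refine ENNReal.lt_iff_exists_rat_btwn.mp ?_
      exact ENNReal.lt_add_right httop (by simp)
    choose q hq0 hq1 hq2 using hex
    have htend : Tendsto (fun j : ℕ => ((Real.toNNReal (q j) : ℝ≥0) : ℝ≥0∞)) atTop (𝓝 t) := by
      have h1 : Tendsto (fun j : ℕ => t + ((j : ℝ≥0∞) + 1)⁻¹) atTop (𝓝 (t + 0)) := by
        refine Tendsto.add tendsto_const_nhds ?_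
        have := ENNReal.tendsto_inv_nat_nhds_zero.comp (tendsto_add_atTop_nat 1)
        simpa [Function.comp_def] using this
      rw [add_zero] at h1
      exact tendsto_of_tendsto_of_tendsto_of_le_of_le tendsto_const_nhds h1
        (fun j => (hq1 j).le) (fun j => (hq2 j).le)
    have htendW : Tendsto (fun j : ℕ => ((Real.toNNReal (q j) : ℝ≥0) : ℝ≥0∞)) atTop
        (𝓝[Set.Ici t] t) :=
      tendsto_nhdsWithin_of_tendsto_nhds_of_eventually_within _ htend
        (Eventually.of_forall fun j => (hq1 j).le)
    have h2 : Tendsto (fun j : ℕ => M ((Real.toNNReal (q j) : ℝ≥0) : ℝ≥0∞) ω) atTop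
        (𝓝 (M t ω)) := (hMrc ω t httop).tendsto.comp htendW
    have h3 : ∀ j : ℕ, M ((Real.toNNReal (q j) : ℝ≥0) : ℝ≥0∞) ω = M (ζ ω) ω := by
      intro j
      have hζq : ζ ω ≤ ((Real.toNNReal (q j) : ℝ≥0) : ℝ≥0∞) := (hζt.trans (hq1 j)).le
      have := H (q j)
      rwa [min_eq_right hζq] at this
    have h4 : Tendsto (fun j : ℕ => M ((Real.toNNReal (q j) : ℝ≥0) : ℝ≥0∞) ω) atTop
        (𝓝 (M (ζ ω) ω)) := by
      simp only [h3]
      exact tendsto_const_nhds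
    exact tendsto_nhds_unique h2 h4
  -- contradiction: M t ω ≤ 1/m ≤ 1/n < M ζ ω = M t ω
  have : M t ω ≤ 1 / (n : ℝ) := le_trans htS honediv
  rw [hMt] at this
  exact absurd this hMζ.not_ge
end

section
/- Let $\tau$ be a random time on a probability space $(\Omega, \mathcal G, Q)$, $\mathbb F$ a right-continuous filtration, and $\mathbb F^\tau$ the progressive expansion (smallest filtration containing $\mathbb F$, satisfying the usual conditions under $Q$, and making $\tau$ a stopping time). Suppose that for every $\mathbb F^\tau$-stopping time $\rho$ with $\rho < \tau$ a.s.\ there exists an $\mathbb F$-stopping time $\sigma$ with $\sigma \wedge \tau = \rho \wedge \tau$. If $\tau$ is $\mathbb F^\tau$-predictable (announced by a strictly increasing sequence of $\mathbb F^\tau$-stopping times $\rho_n \uparrow \tau$ with $\rho_n < \tau$), then $\tau$ is $Q$-a.s.\ equal to an $\mathbb F$-stopping time, and consequently $Q(\tau > t \mid \mathcal F_t) = \mathbf 1_{\{\tau > t\}}$ $Q$-a.s.\ for every $t$. -/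
open MeasureTheory Filter Topology
open scoped NNReal ENNReal

/-- Theorem 3.7(ii), contrapositive form: let `𝓕^τ` be the progressive expansion of `𝓕`
by the random time `τ`, and suppose every `𝓕^τ`-stopping time strictly before `τ` agrees
with an `𝓕`-stopping time before `τ`. If `τ` is `𝓕^τ`-predictable (announced by a
strictly increasing sequence of `𝓕^τ`-stopping times `ρ_n ↑ τ`, `ρ_n < τ`), then `τ` is
`Q`-a.s. equal to an `𝓕`-stopping time, and consequently
`Q(τ > t | 𝓕_t) = 1_{τ > t}` `Q`-a.s. for every `t`. -/
theorem predictable_time_is_stopping_time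
    {Ω : Type*} {m0 : MeasurableSpace Ω} (Q : Measure Ω) [IsProbabilityMeasure Q]
    (𝓕 𝓕τ : Filtration ℝ≥0∞ m0)
    -- right-continuity of `𝓕`:
    (hrc : ∀ t : ℝ≥0∞, 𝓕 t = ⨅ u ∈ Set.Ioi t, 𝓕 u)
    -- `𝓕^τ` contains `𝓕` and makes `τ` a stopping time (progressive expansion):
    (hle : ∀ t, 𝓕 t ≤ 𝓕τ t)
    (τ : Ω → ℝ≥0∞) (hτ : IsStoppingTime 𝓕τ (fun ω => (τ ω : WithTop ℝ≥0∞)))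
    -- structural fact for progressive enlargements: every `𝓕^τ`-stopping time strictly
    -- before `τ` agrees before `τ` with an `𝓕`-stopping time:
    (hstruct : ∀ ρ : Ω → ℝ≥0∞, IsStoppingTime 𝓕τ (fun ω => (ρ ω : WithTop ℝ≥0∞)) → (∀ᵐ ω ∂Q, ρ ω < τ ω) →
      ∃ σ : Ω → ℝ≥0∞, IsStoppingTime 𝓕 (fun ω => (σ ω : WithTop ℝ≥0∞)) ∧ ∀ᵐ ω ∂Q, min (σ ω) (τ ω) = min (ρ ω) (τ ω))
    -- `τ` is `𝓕^τ`-predictable: announced by stopping times `ρ_n ↑ τ`, `ρ_n < τ`: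
    (ρseq : ℕ → Ω → ℝ≥0∞)
    (hρst : ∀ n, IsStoppingTime 𝓕τ (fun ω => (ρseq n ω : WithTop ℝ≥0∞)))
    (hρmono : ∀ ω, StrictMono fun n => ρseq n ω)
    (hρlt : ∀ n ω, ρseq n ω < τ ω)
    (hρlim : ∀ ω, Tendsto (fun n => ρseq n ω) atTop (𝓝 (τ ω))) :
    (∃ σ : Ω → ℝ≥0∞, IsStoppingTime 𝓕 (fun ω => (σ ω : WithTop ℝ≥0∞)) ∧ ∀ᵐ ω ∂Q, τ ω = σ ω)
      ∧ ∀ t : ℝ≥0∞, t ≠ ⊤ →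
          Q[({ω | t < τ ω}).indicator (fun _ => (1 : ℝ)) | 𝓕 t]
            =ᵐ[Q] ({ω | t < τ ω}).indicator (fun _ => (1 : ℝ)) := by

  choose σ hσst hσae using fun n => hstruct (ρseq n) (hρst n) (.of_forall fun ω => hρlt n ω)
  set σS : Ω → ℝ≥0∞ := fun ω => ⨆ n, σ n ω with hSdef
  have hSst : IsStoppingTime 𝓕 (fun ω => (σS ω : WithTop ℝ≥0∞)) := by
    intro t
    have : {ω | (σS ω : WithTop ℝ≥0∞) ≤ t} = ⋂ n, {ω | (σ n ω : WithTop ℝ≥0∞) ≤ t} := by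
      ext ω; simp [hSdef, iSup_le_iff, Set.mem_iInter]
    rw [this]
    exact MeasurableSet.iInter fun n => hσst n t
  have hae : ∀ᵐ ω ∂Q, τ ω = σS ω := by
    have hall : ∀ᵐ ω ∂Q, ∀ n, min (σ n ω) (τ ω) = min (ρseq n ω) (τ ω) :=
      ae_all_iff.mpr hσae
    filter_upwards [hall] with ω hω
    have hσρ : ∀ n, σ n ω = ρseq n ω := by
      intro n
      have h1 : min (σ n ω) (τ ω) = ρseq n ω := by
        rw [hω n]; exact min_eq_left (hρlt n ω).le
      rcases le_total (σ n ω) (τ ω) with h | h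
      · rwa [min_eq_left h] at h1
      · rw [min_eq_right h] at h1
        exact absurd h1.symm (hρlt n ω).ne
    have hmono : Monotone fun n => ρseq n ω := (hρmono ω).monotone
    have hsup : Tendsto (fun n => ρseq n ω) atTop (𝓝 (⨆ n, ρseq n ω)) :=
      tendsto_atTop_iSup hmono
    have : τ ω = ⨆ n, ρseq n ω := tendsto_nhds_unique (hρlim ω) hsup
    simp only [hSdef]
    rw [this]
    exact iSup_congr fun n => (hσρ n).symm
  refine ⟨⟨σS, hSst, hae⟩, ?_⟩
  intro t _
  have hset : MeasurableSet[𝓕 t] {ω | t < σS ω} := by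
    have : {ω | t < σS ω} = {ω | (σS ω : WithTop ℝ≥0∞) ≤ t}ᶜ := by
      ext ω; simp [not_le]
    rw [this]; exact (hSst t).compl
  have heq : ({ω | t < τ ω}).indicator (fun _ => (1 : ℝ))
      =ᵐ[Q] ({ω | t < σS ω}).indicator (fun _ => (1 : ℝ)) := by
    filter_upwards [hae] with ω h
    simp only [Set.indicator, Set.mem_setOf_eq, h]
  calc Q[({ω | t < τ ω}).indicator (fun _ => (1 : ℝ)) | 𝓕 t]
      =ᵐ[Q] Q[({ω | t < σS ω}).indicator (fun _ => (1 : ℝ)) | 𝓕 t] := condExp_congr_ae heq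
    _ = ({ω | t < σS ω}).indicator (fun _ => (1 : ℝ)) :=
        condExp_of_stronglyMeasurable (𝓕.le t)
          (stronglyMeasurable_const.indicator hset)
          ((integrable_const (1 : ℝ)).indicator (𝓕.le t _ hset))
    _ =ᵐ[Q] ({ω | t < τ ω}).indicator (fun _ => (1 : ℝ)) := heq.symm
end
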